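/- Fix $L > 0$, an integer $n \geq 2$, and $i \in \{1,\dots,n\}$. For every $(\rho,z)$ with $\rho > 0$, the renormalized sequence $m \mapsto \sum_{l=-m}^{m} U_{\Gamma_{nl+i}}(\rho,z) + \tfrac{2}{n}\log m$ converges as $m \to \infty$; that is, the renormalized potential $u_i(\rho,z)$ is well defined. -/

import Mathlib

open Filter Topology

/-- The Green's function `U_{[a,b]}(ρ,z) = log(r_a - z_a) - log(r_b - z_b)` of a uniform
charge distribution along the interval `[a,b]` of the `z`-axis, where
`r_c = √(ρ² + (z-c)²)` and `z_c = z - c`. -/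
noncomputable def intervalGreen (a b ρ z : ℝ) : ℝ :=
  Real.log (Real.sqrt (ρ ^ 2 + (z - a) ^ 2) - (z - a)) -
    Real.log (Real.sqrt (ρ ^ 2 + (z - b) ^ 2) - (z - b))

/-- The Green's function of the rod `Γ_j = [(j-1)L/n, jL/n]`, `j ∈ ℤ`. -/
noncomputable def rodGreen (L : ℝ) (n : ℕ) (j : ℤ) (ρ z : ℝ) : ℝ :=
  intervalGreen (((j : ℝ) - 1) * L / n) ((j : ℝ) * L / n) ρ z

/-- The renormalized partial sums
`∑_{l=-m}^{m} U_{Γ_{nl+i}}(ρ,z) + (2/n) log m` defining the potential `u_i`. -/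
noncomputable def renormSum (L : ℝ) (n i : ℕ) (ρ z : ℝ) (m : ℕ) : ℝ :=
  (∑ l ∈ Finset.Icc (-(m : ℤ)) (m : ℤ), rodGreen L n ((n : ℤ) * l + (i : ℤ)) ρ z) +
    (2 / (n : ℝ)) * Real.log m

/- ### Auxiliary lemmas -/

lemma aux_sqrt_sub_pos {ρ : ℝ} (hρ : 0 < ρ) (y : ℝ) :
    0 < Real.sqrt (ρ ^ 2 + y ^ 2) - y := by
  have h : |y| < Real.sqrt (ρ ^ 2 + y ^ 2) := by
    rw [← Real.sqrt_sq_eq_abs]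
    exact Real.sqrt_lt_sqrt (sq_nonneg y) (by nlinarith)
  linarith [le_abs_self y]

lemma aux_hasDerivAt {ρ z : ℝ} (hρ : 0 < ρ) (c : ℝ) :
    HasDerivAt (fun t => Real.log (Real.sqrt (ρ ^ 2 + (z - t) ^ 2) - (z - t)))
      (Real.sqrt (ρ ^ 2 + (z - c) ^ 2))⁻¹ c := by
  have h1 : HasDerivAt (fun t : ℝ => z - t) (-1) c := (hasDerivAt_id c).const_sub z
  have h3 : HasDerivAt (fun t : ℝ => ρ ^ 2 + (z - t) ^ 2)
      ((2 : ℕ) * (z - c) ^ 1 * (-1)) c := (h1.pow 2).const_add (ρ ^ 2)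
  have hpos : (0:ℝ) < ρ ^ 2 + (z - c) ^ 2 := by positivity
  have h4 := h3.sqrt hpos.ne'
  have h5 := h4.sub h1
  have hs : 0 < Real.sqrt (ρ ^ 2 + (z - c) ^ 2) := Real.sqrt_pos.2 hpos
  have h6 := h5.log (aux_sqrt_sub_pos hρ (z - c)).ne'
  convert h6 using 1
  · rfl
  have hne := (aux_sqrt_sub_pos hρ (z - c)).ne'
  simp only [Pi.sub_apply, pow_one, Nat.cast_ofNat]
  field_simp
  ring

lemma aux_cont {ρ z : ℝ} (hρ : 0 < ρ) :
    Continuous fun t : ℝ => (Real.sqrt (ρ ^ 2 + (z - t) ^ 2))⁻¹ := by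
  refine Continuous.inv₀ (Real.continuous_sqrt.comp (by continuity)) fun t => ?_
  have : (0:ℝ) < ρ ^ 2 + (z - t) ^ 2 := by positivity
  exact (Real.sqrt_pos.2 this).ne'

lemma aux_green_eq {ρ : ℝ} (hρ : 0 < ρ) (z a b : ℝ) :
    intervalGreen a b ρ z = -∫ t in a..b, (Real.sqrt (ρ ^ 2 + (z - t) ^ 2))⁻¹ := by
  have h := intervalIntegral.integral_eq_sub_of_hasDerivAt
    (f := fun t => Real.log (Real.sqrt (ρ ^ 2 + (z - t) ^ 2) - (z - t)))
    (f' := fun t => (Real.sqrt (ρ ^ 2 + (z - t) ^ 2))⁻¹)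
    (fun t _ => aux_hasDerivAt hρ t) ((aux_cont (z := z) hρ).intervalIntegrable a b)
  rw [h]; simp [intervalGreen]

lemma aux_integral_bounds {ρ z a b d D : ℝ} (hρ : 0 < ρ) (hab : a ≤ b) (hd : 0 < d)
    (h1 : ∀ t ∈ Set.Icc a b, d ≤ |z - t|) (h2 : ∀ t ∈ Set.Icc a b, |z - t| ≤ D) :
    (b - a) / (ρ + D) ≤ (∫ t in a..b, (Real.sqrt (ρ ^ 2 + (z - t) ^ 2))⁻¹) ∧
      (∫ t in a..b, (Real.sqrt (ρ ^ 2 + (z - t) ^ 2))⁻¹) ≤ (b - a) / d := by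
  have hint : IntervalIntegrable (fun t => (Real.sqrt (ρ ^ 2 + (z - t) ^ 2))⁻¹)
      MeasureTheory.volume a b := (aux_cont (z := z) hρ).intervalIntegrable a b
  have hDpos : 0 < ρ + D := by
    have := h2 a ⟨le_rfl, hab⟩; have := h1 a ⟨le_rfl, hab⟩
    linarith
  constructor
  · have hle : ∀ t ∈ Set.Icc a b, (ρ + D)⁻¹ ≤ (Real.sqrt (ρ ^ 2 + (z - t) ^ 2))⁻¹ := by
      intro t ht
      have hs : Real.sqrt (ρ ^ 2 + (z - t) ^ 2) ≤ ρ + D := by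
        have h2' := h2 t ht
        have : Real.sqrt (ρ ^ 2 + (z - t) ^ 2) ≤ ρ + |z - t| := by
          rw [show ρ + |z - t| = Real.sqrt ((ρ + |z - t|) ^ 2) by
            rw [Real.sqrt_sq (by positivity)]]
          apply Real.sqrt_le_sqrt
          have := abs_nonneg (z - t)
          nlinarith [sq_abs (z - t)]
        linarith
      have hspos : 0 < Real.sqrt (ρ ^ 2 + (z - t) ^ 2) :=
        Real.sqrt_pos.2 (by positivity)
      simpa [one_div] using one_div_le_one_div_of_le hspos hs
    calc (b - a) / (ρ + D) = ∫ _ in a..b, (ρ + D)⁻¹ := by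
          rw [intervalIntegral.integral_const, smul_eq_mul, div_eq_mul_inv]
      _ ≤ _ := intervalIntegral.integral_mono_on hab
          (intervalIntegrable_const) hint hle
  · have hle : ∀ t ∈ Set.Icc a b, (Real.sqrt (ρ ^ 2 + (z - t) ^ 2))⁻¹ ≤ d⁻¹ := by
      intro t ht
      have h1' := h1 t ht
      have hs : d ≤ Real.sqrt (ρ ^ 2 + (z - t) ^ 2) := by
        have : |z - t| ≤ Real.sqrt (ρ ^ 2 + (z - t) ^ 2) := by
          rw [← Real.sqrt_sq_eq_abs]
          exact Real.sqrt_le_sqrt (by nlinarith)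
        linarith
      simpa [one_div] using one_div_le_one_div_of_le hd hs
    calc (∫ t in a..b, (Real.sqrt (ρ ^ 2 + (z - t) ^ 2))⁻¹)
        ≤ ∫ _ in a..b, d⁻¹ := intervalIntegral.integral_mono_on hab hint
          (intervalIntegrable_const) hle
      _ = (b - a) / d := by
          rw [intervalIntegral.integral_const, smul_eq_mul, div_eq_mul_inv]

lemma aux_log_ratio (m : ℕ) (hm : 1 ≤ m) :
    1 / ((m:ℝ) + 1) ≤ Real.log (((m:ℝ) + 1) / m) ∧
      Real.log (((m:ℝ) + 1) / m) ≤ 1 / m := by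
  have hm' : (1:ℝ) ≤ m := by exact_mod_cast hm
  have hm0 : (0:ℝ) < m := by linarith
  constructor
  · have h := Real.log_le_sub_one_of_pos (x := (m:ℝ) / (m + 1)) (by positivity)
    have hlog : Real.log ((m:ℝ) / (m + 1)) = - Real.log (((m:ℝ) + 1) / m) := by
      rw [← Real.log_inv]; congr 1; field_simp
    rw [hlog] at h
    have he : (m:ℝ) / (m + 1) - 1 = -(1 / (m + 1)) := by field_simp; ring
    rw [he] at h; linarith
  · have h := Real.log_le_sub_one_of_pos (x := ((m:ℝ) + 1) / m) (by positivity)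
    have he : ((m:ℝ) + 1) / m - 1 = 1 / m := by field_simp; ring
    linarith [he ▸ h]

lemma aux_arith1 {L Z ρ N M : ℝ} (hL : 0 < L) (hZ : 0 ≤ Z) (hρ : 0 < ρ)
    (hN : 1 ≤ N) (hM : 1 ≤ M) (hMZ : 2 * Z ≤ M * L) :
    -((2 * (L + Z + ρ) / (N * L)) / M ^ 2) ≤ 1 / (N * (M + 1)) - (L / N) / (M * L - Z) := by
  have hN0 : 0 < N := by linarith
  have hM0 : 0 < M := by linarith
  have hd : 0 < M * L - Z := by nlinarith
  have hd2 : M * L / 2 ≤ M * L - Z := by nlinarith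
  have key : (L / N) / (M * L - Z) - 1 / (N * (M + 1))
      = (L + Z) / (N * ((M * L - Z) * (M + 1))) := by
    rw [div_div, div_sub_div _ _ (by positivity) (by positivity),
      div_eq_div_iff (by positivity) (by positivity)]
    ring
  have h2 : (L + Z) / (N * ((M * L - Z) * (M + 1))) ≤ 2 * (L + Z + ρ) / (N * L) / M ^ 2 := by
    rw [div_div, div_le_div_iff₀ (by positivity) (by positivity)]
    nlinarith [mul_le_mul_of_nonneg_left hd2 (by positivity : (0:ℝ) ≤ 2 * (L + Z + ρ) * N * M),
      mul_pos (by positivity : (0:ℝ) < 2 * (L + Z + ρ) * N) hd,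
      mul_pos (mul_pos hN0 hL) (mul_pos hM0 hM0)]
  linarith [key ▸ h2]

lemma aux_arith2 {L Z ρ N M : ℝ} (hL : 0 < L) (hZ : 0 ≤ Z) (hρ : 0 < ρ)
    (hN : 1 ≤ N) (hM : 1 ≤ M) :
    1 / (N * M) - (L / N) / (ρ + ((M + 2) * L + Z)) ≤ (2 * (L + Z + ρ) / (N * L)) / M ^ 2 := by
  have hN0 : 0 < N := by linarith
  have hM0 : 0 < M := by linarith
  have hD : 0 < ρ + ((M + 2) * L + Z) := by nlinarith
  have key : 1 / (N * M) - (L / N) / (ρ + ((M + 2) * L + Z))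
      = (ρ + 2 * L + Z) / (N * (M * (ρ + ((M + 2) * L + Z)))) := by
    field_simp
    ring
  rw [key, div_div, div_le_div_iff₀ (by positivity) (by positivity)]
  nlinarith [mul_le_mul_of_nonneg_left (show M * L ≤ ρ + ((M + 2) * L + Z) by nlinarith)
      (by positivity : (0:ℝ) ≤ (ρ + 2 * L + Z) * N * M),
    mul_pos (mul_pos hN0 hL) (mul_pos hM0 hM0),
    mul_pos (by positivity : (0:ℝ) < N * M) hD]

/-- The key quantitative bound for a single distant rod. -/
lemma aux_rod_bound {L ρ z : ℝ} (hL : 0 < L) (hρ : 0 < ρ) {n : ℕ} (hn : 1 ≤ n)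
    {a b : ℝ} {m : ℕ} (hm : 1 ≤ m) (hmz : 2 * |z| ≤ (m:ℝ) * L)
    (hba : b - a = L / n)
    (hd : ∀ t ∈ Set.Icc a b, (m:ℝ) * L - |z| ≤ |z - t|)
    (hD : ∀ t ∈ Set.Icc a b, |z - t| ≤ ((m:ℝ) + 2) * L + |z|) :
    |intervalGreen a b ρ z + (1 / (n:ℝ)) * Real.log (((m:ℝ) + 1) / m)| ≤
      (2 * (L + |z| + ρ) / ((n:ℝ) * L)) / (m:ℝ) ^ 2 := by
  have hn0 : (1:ℝ) ≤ n := by exact_mod_cast hn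
  have hn' : (0:ℝ) < n := by linarith
  have hm' : (1:ℝ) ≤ m := by exact_mod_cast hm
  have hm0 : (0:ℝ) < m := by linarith
  have hdpos : 0 < (m:ℝ) * L - |z| := by nlinarith [abs_nonneg z]
  have hab : a ≤ b := by
    have : 0 < L / (n:ℝ) := by positivity
    linarith
  obtain ⟨hlow, hhigh⟩ := aux_integral_bounds hρ hab hdpos hd hD
  rw [aux_green_eq hρ z a b]
  obtain ⟨hl1, hl2⟩ := aux_log_ratio m hm
  rw [hba] at hlow hhigh
  rw [abs_le]
  have e1 : (1/(n:ℝ)) * (1/((m:ℝ)+1)) = 1/((n:ℝ)*((m:ℝ)+1)) := by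
    rw [div_mul_div_comm]; norm_num
  have e2 : (1/(n:ℝ)) * (1/(m:ℝ)) = 1/((n:ℝ)*(m:ℝ)) := by
    rw [div_mul_div_comm]; norm_num
  constructor
  · have h1 := aux_arith1 (Z := |z|) (N := (n:ℝ)) (M := (m:ℝ)) hL (abs_nonneg z) hρ hn0 hm' hmz
    have h2 : (1/(n:ℝ)) * (1/((m:ℝ)+1)) ≤ (1/(n:ℝ)) * Real.log (((m:ℝ)+1)/m) :=
      mul_le_mul_of_nonneg_left hl1 (by positivity)
    linarith
  · have h1 := aux_arith2 (Z := |z|) (N := (n:ℝ)) (M := (m:ℝ)) hL (abs_nonneg z) hρ hn0 hm'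
    have h2 : (1/(n:ℝ)) * Real.log (((m:ℝ)+1)/m) ≤ (1/(n:ℝ)) * (1/(m:ℝ)) :=
      mul_le_mul_of_nonneg_left hl2 (by positivity)
    linarith

lemma aux_split (L : ℝ) (n i : ℕ) (ρ z : ℝ) (m : ℕ) :
    renormSum L n i ρ z (m + 1) - renormSum L n i ρ z m =
      rodGreen L n ((n:ℤ) * ((m:ℤ) + 1) + i) ρ z
      + rodGreen L n ((n:ℤ) * (-((m:ℤ) + 1)) + i) ρ z
      + (2 / (n:ℝ)) * (Real.log ((m:ℝ) + 1) - Real.log m) := by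
  have hins : Finset.Icc (-((m:ℤ) + 1)) ((m:ℤ) + 1) =
      insert (-((m:ℤ) + 1)) (insert ((m:ℤ) + 1) (Finset.Icc (-(m:ℤ)) (m:ℤ))) := by
    ext x; simp only [Finset.mem_Icc, Finset.mem_insert]; omega
  have h1 : (-((m:ℤ) + 1)) ∉ insert ((m:ℤ) + 1) (Finset.Icc (-(m:ℤ)) (m:ℤ)) := by
    simp only [Finset.mem_insert, Finset.mem_Icc]; omega
  have h2 : ((m:ℤ) + 1) ∉ Finset.Icc (-(m:ℤ)) (m:ℤ) := by
    simp only [Finset.mem_Icc]; omega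
  simp only [renormSum]
  rw [show ((m + 1 : ℕ) : ℤ) = (m:ℤ) + 1 by push_cast; ring,
      show ((m + 1 : ℕ) : ℝ) = (m:ℝ) + 1 by push_cast; ring,
      hins, Finset.sum_insert h1, Finset.sum_insert h2]
  ring

set_option maxHeartbeats 1000000 in
/-- **Convergence of the renormalized potentials.** For `L > 0`, `n ≥ 2`,
`i ∈ {1,…,n}` and any `(ρ,z)` with `ρ > 0`, the renormalized sequence
`m ↦ ∑_{l=-m}^{m} U_{Γ_{nl+i}}(ρ,z) + (2/n) log m` converges as `m → ∞`. -/
theorem renormSum_converges (L : ℝ) (hL : 0 < L) (n : ℕ) (hn : 2 ≤ n)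
    (i : ℕ) (hi1 : 1 ≤ i) (hin : i ≤ n) (ρ z : ℝ) (hρ : 0 < ρ) :
    ∃ c : ℝ, Tendsto (fun m : ℕ => renormSum L n i ρ z m) atTop (𝓝 c) := by
  have hn1 : 1 ≤ n := le_trans one_le_two hn
  have hn' : (0:ℝ) < n := by exact_mod_cast lt_of_lt_of_le two_pos hn
  have hi' : (1:ℝ) ≤ i := by exact_mod_cast hi1
  have hin' : (i:ℝ) ≤ n := by exact_mod_cast hin
  set f : ℕ → ℝ := fun m => renormSum L n i ρ z m with hf
  refine cauchySeq_tendsto_of_complete (cauchySeq_of_summable_dist ?_)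
  set C : ℝ := 2 * (2 * (L + |z| + ρ) / ((n:ℝ) * L)) with hC
  apply Summable.of_norm_bounded_eventually_nat (g := fun m => C * (1 / (m:ℝ) ^ 2))
  · exact (Real.summable_one_div_nat_pow.2 one_lt_two).mul_left C
  obtain ⟨M, hM⟩ := exists_nat_ge (2 * |z| / L)
  filter_upwards [Filter.eventually_ge_atTop (max M 1)] with m hm
  have hm1 : 1 ≤ m := le_trans (le_max_right M 1) hm
  have hm' : (1:ℝ) ≤ m := by exact_mod_cast hm1
  have hm0 : (0:ℝ) < m := by linarith
  have hmM : (M:ℝ) ≤ m := by exact_mod_cast le_trans (le_max_left M 1) hm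
  have hmz : 2 * |z| ≤ (m:ℝ) * L := by
    rw [div_le_iff₀ hL] at hM
    nlinarith
  -- rewrite the distance as the absolute value of the increment
  have hdist : dist (f m) (f (m + 1)) = |f (m + 1) - f m| := by
    rw [Real.dist_eq, abs_sub_comm]
  have hlogsplit : Real.log ((m:ℝ) + 1) - Real.log m = Real.log (((m:ℝ) + 1) / m) := by
    rw [Real.log_div (by positivity) (by positivity)]
  -- the two rods
  set j₁ : ℤ := (n:ℤ) * ((m:ℤ) + 1) + i with hj₁
  set j₂ : ℤ := (n:ℤ) * (-((m:ℤ) + 1)) + i with hj₂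
  have hj₁r : ((j₁ : ℝ)) = (n:ℝ) * ((m:ℝ) + 1) + i := by push_cast [hj₁]; ring
  have hj₂r : ((j₂ : ℝ)) = -((n:ℝ) * ((m:ℝ) + 1)) + i := by push_cast [hj₂]; ring
  -- bound for the positive rod
  have hbound₁ : |rodGreen L n j₁ ρ z + (1 / (n:ℝ)) * Real.log (((m:ℝ) + 1) / m)| ≤
      (2 * (L + |z| + ρ) / ((n:ℝ) * L)) / (m:ℝ) ^ 2 := by
    have ha' : ((m:ℝ) + 1) * L ≤ ((j₁:ℝ) - 1) * L / n := by
      rw [le_div_iff₀ hn', hj₁r]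
      linarith [mul_nonneg (by linarith : (0:ℝ) ≤ (i:ℝ) - 1) hL.le]
    have hb' : (j₁:ℝ) * L / n ≤ ((m:ℝ) + 2) * L := by
      rw [div_le_iff₀ hn', hj₁r]
      linarith [mul_nonneg (by linarith : (0:ℝ) ≤ (n:ℝ) - i) hL.le,
        mul_nonneg (mul_nonneg hm0.le hL.le) hn'.le]
    apply aux_rod_bound hL hρ hn1 hm1 hmz
    · rw [hj₁r]; field_simp; ring
    · intro t ht
      obtain ⟨hta, htb⟩ := ht
      have h1 : (m:ℝ) * L - |z| ≤ t - z := by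
        have hz := le_abs_self z
        linarith [ha']
      calc (m:ℝ) * L - |z| ≤ t - z := h1
        _ ≤ |t - z| := le_abs_self _
        _ = |z - t| := abs_sub_comm t z
    · intro t ht
      obtain ⟨hta, htb⟩ := ht
      have htabs : |t| ≤ ((m:ℝ) + 2) * L := by
        rw [abs_le]
        constructor
        · linarith [ha', mul_nonneg hm0.le hL.le]
        · linarith [hb']
      have : |z - t| ≤ |z - 0| + |0 - t| := abs_sub_le z 0 t
      simp only [sub_zero, zero_sub, abs_neg] at this
      linarith
  -- bound for the negative rod
  have hbound₂ : |rodGreen L n j₂ ρ z + (1 / (n:ℝ)) * Real.log (((m:ℝ) + 1) / m)| ≤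
      (2 * (L + |z| + ρ) / ((n:ℝ) * L)) / (m:ℝ) ^ 2 := by
    have hb' : (j₂:ℝ) * L / n ≤ -((m:ℝ) * L) := by
      rw [div_le_iff₀ hn', hj₂r]
      linarith [mul_nonneg (by linarith : (0:ℝ) ≤ (n:ℝ) - i) hL.le]
    have ha' : -(((m:ℝ) + 2) * L) ≤ ((j₂:ℝ) - 1) * L / n := by
      rw [le_div_iff₀ hn', hj₂r]
      linarith [mul_nonneg (by linarith : (0:ℝ) ≤ (i:ℝ) - 1) hL.le,
        mul_nonneg hn'.le hL.le]
    apply aux_rod_bound hL hρ hn1 hm1 hmz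
    · rw [hj₂r]; field_simp; ring
    · intro t ht
      obtain ⟨hta, htb⟩ := ht
      have h1 : (m:ℝ) * L - |z| ≤ z - t := by
        have hz := neg_abs_le z
        linarith [hb']
      calc (m:ℝ) * L - |z| ≤ z - t := h1
        _ ≤ |z - t| := le_abs_self _
    · intro t ht
      obtain ⟨hta, htb⟩ := ht
      have htabs : |t| ≤ ((m:ℝ) + 2) * L := by
        rw [abs_le]
        constructor
        · linarith [ha']
        · linarith [hb', mul_nonneg hm0.le hL.le]
      have : |z - t| ≤ |z - 0| + |0 - t| := abs_sub_le z 0 t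
      simp only [sub_zero, zero_sub, abs_neg] at this
      linarith
  -- put everything together
  have hsplit := aux_split L n i ρ z m
  have heq : f (m + 1) - f m =
      (rodGreen L n j₁ ρ z + (1 / (n:ℝ)) * Real.log (((m:ℝ) + 1) / m))
      + (rodGreen L n j₂ ρ z + (1 / (n:ℝ)) * Real.log (((m:ℝ) + 1) / m)) := by
    rw [hf]
    simp only
    rw [hsplit, hlogsplit]
    ring
  rw [Real.norm_eq_abs, abs_of_nonneg dist_nonneg, hdist, heq]
  calc |_ + _| ≤ _ + _ := abs_add_le _ _
    _ ≤ (2 * (L + |z| + ρ) / ((n:ℝ) * L)) / (m:ℝ) ^ 2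
        + (2 * (L + |z| + ρ) / ((n:ℝ) * L)) / (m:ℝ) ^ 2 := add_le_add hbound₁ hbound₂
    _ = C * (1 / (m:ℝ) ^ 2) := by rw [hC]; ring
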